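/- For β ∈ (0,1), the function v(z₁,z₂) = (2/(1-β))|z₂|(|z₁|^β + |z₁|^{2-β}) is locally β-Hölder continuous on ℂ² but not locally α-Hölder continuous near points (0,z₂) with z₂ ≠ 0 for any α > β. -/

import Mathlib

open Real Set Metric Filter Topology
open scoped NNReal ENNReal

lemma nn_add_rpow_le {p : ℝ} (a b : ℝ≥0) (hp0 : 0 < p) (hp1 : p ≤ 1) :
    (a + b) ^ p ≤ a ^ p + b ^ p := by
  have h := NNReal.rpow_add_rpow_le (q := 1) a b hp0 hp1
  simp only [NNReal.rpow_one, div_one, one_div] at h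
  calc (a + b) ^ p ≤ ((a ^ p + b ^ p) ^ (p⁻¹ : ℝ)) ^ p := NNReal.rpow_le_rpow h hp0.le
    _ = a ^ p + b ^ p := by
        rw [← NNReal.rpow_mul, inv_mul_cancel₀ hp0.ne', NNReal.rpow_one]

lemma real_add_rpow_le {p a b : ℝ} (hp0 : 0 < p) (hp1 : p ≤ 1) (ha : 0 ≤ a) (hb : 0 ≤ b) :
    (a + b) ^ p ≤ a ^ p + b ^ p := by
  have h := nn_add_rpow_le (⟨a, ha⟩ : ℝ≥0) ⟨b, hb⟩ hp0 hp1
  have := NNReal.coe_le_coe.2 h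
  exact this

lemma rpow_sub_rpow_le_of_le {p a b : ℝ} (hp0 : 0 < p) (hp1 : p ≤ 1) (hb : 0 ≤ b)
    (hba : b ≤ a) : a ^ p - b ^ p ≤ (a - b) ^ p := by
  have h : a ^ p ≤ (a - b) ^ p + b ^ p := by
    have := real_add_rpow_le hp0 hp1 (sub_nonneg.2 hba) hb
    simpa using this
  linarith

lemma abs_rpow_sub_rpow_le {p a b : ℝ} (hp0 : 0 < p) (hp1 : p ≤ 1) (ha : 0 ≤ a) (hb : 0 ≤ b) :
    |a ^ p - b ^ p| ≤ |a - b| ^ p := by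
  rcases le_total b a with h | h
  · rw [abs_of_nonneg (sub_nonneg.2 (Real.rpow_le_rpow hb h hp0.le)),
      abs_of_nonneg (sub_nonneg.2 h)]
    exact rpow_sub_rpow_le_of_le hp0 hp1 hb h
  · rw [abs_sub_comm, abs_sub_comm a b]
    rw [abs_of_nonneg (sub_nonneg.2 (Real.rpow_le_rpow ha h hp0.le)),
      abs_of_nonneg (sub_nonneg.2 h)]
    exact rpow_sub_rpow_le_of_le hp0 hp1 ha h

lemma abs_rpow_sub_rpow_le_mul {q M a b : ℝ} (hq : 1 ≤ q) (ha : a ∈ Icc 0 M)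
    (hb : b ∈ Icc 0 M) : |a ^ q - b ^ q| ≤ q * M ^ (q - 1) * |a - b| := by
  have hM : 0 ≤ M := ha.1.trans ha.2
  have hdiff : ∀ x ∈ Icc (0:ℝ) M, DifferentiableAt ℝ (fun x : ℝ => x ^ q) x := fun x _ =>
    (Real.hasDerivAt_rpow_const (Or.inr hq)).differentiableAt
  have hb' : ∀ x ∈ Icc (0:ℝ) M, ‖deriv (fun x : ℝ => x ^ q) x‖ ≤ q * M ^ (q - 1) := by
    intro x hx
    rw [(Real.hasDerivAt_rpow_const (Or.inr hq)).deriv]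
    rw [Real.norm_eq_abs, abs_mul, abs_of_nonneg (by linarith : (0:ℝ) ≤ q),
      abs_of_nonneg (Real.rpow_nonneg hx.1 _)]
    have : x ^ (q - 1) ≤ M ^ (q - 1) := Real.rpow_le_rpow hx.1 hx.2 (by linarith)
    nlinarith
  have := (convex_Icc (0:ℝ) M).norm_image_sub_le_of_norm_deriv_le hdiff hb' hb ha
  simpa [Real.norm_eq_abs] using this

lemma holderOnWith_of_dist_le {X Y : Type*} [PseudoMetricSpace X] [PseudoMetricSpace Y]
    {C r : ℝ≥0} {f : X → Y} {s : Set X}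
    (h : ∀ x ∈ s, ∀ y ∈ s, dist (f x) (f y) ≤ C * dist x y ^ (r : ℝ)) :
    HolderOnWith C r f s := by
  intro x hx y hy
  rw [edist_dist, edist_dist, ENNReal.ofReal_rpow_of_nonneg dist_nonneg r.coe_nonneg,
    ← ENNReal.ofReal_coe_nnreal, ← ENNReal.ofReal_mul C.coe_nonneg]
  exact ENNReal.ofReal_le_ofReal (h x hx y hy)

lemma holderOnWith_dist_le {X Y : Type*} [PseudoMetricSpace X] [PseudoMetricSpace Y]
    {C r : ℝ≥0} {f : X → Y} {s : Set X} (h : HolderOnWith C r f s) {x y : X}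
    (hx : x ∈ s) (hy : y ∈ s) : dist (f x) (f y) ≤ C * dist x y ^ (r : ℝ) := by
  have h2 := h.edist_le hx hy
  rw [edist_dist, edist_dist, ENNReal.ofReal_rpow_of_nonneg dist_nonneg r.coe_nonneg,
    ← ENNReal.ofReal_coe_nnreal, ← ENNReal.ofReal_mul C.coe_nonneg] at h2
  exact (ENNReal.ofReal_le_ofReal_iff (by positivity)).1 h2

/-- `v(z₁,z₂) = (2/(1-β))|z₂|(|z₁|^β + |z₁|^{2-β})`. -/
noncomputable def v (β : ℝ) (z : ℂ × ℂ) : ℝ :=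
  (2 / (1 - β)) * ‖z.2‖ * ((‖z.1‖) ^ β + (‖z.1‖) ^ (2 - β))

/-- For `β ∈ (0,1)`, `v` is locally `β`-Hölder continuous on `ℂ²`, but not locally
`α`-Hölder near any point `(0,z₂)` with `z₂ ≠ 0` for any `α > β`. -/
theorem v_holder (β : ℝ) (hβ : β ∈ Set.Ioo (0 : ℝ) 1) :
    (∀ p : ℂ × ℂ, ∃ N ∈ nhds p, ∃ C : NNReal,
      HolderOnWith C ⟨β, hβ.1.le⟩ (v β) N) ∧
    (∀ α : ℝ, ∀ hα : β < α, ∀ z₂ : ℂ, z₂ ≠ 0 →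
      ¬ ∃ N ∈ nhds ((0 : ℂ), z₂), ∃ C : NNReal,
        HolderOnWith C ⟨α, (hβ.1.trans hα).le⟩ (v β) N) := by
  obtain ⟨hβ0, hβ1⟩ := hβ
  have h1β : 0 < 1 - β := by linarith
  have hc : 0 < 2 / (1 - β) := by positivity
  constructor
  · -- local β-Hölder continuity
    intro p
    set M : ℝ := ‖p.1‖ + ‖p.2‖ + 2 with hMdef
    have hM2 : 2 ≤ M := by
      have h1 := norm_nonneg p.1
      have h2 := norm_nonneg p.2
      linarith
    have hM0 : 0 ≤ M := by linarith
    set K : ℝ := (2 / (1 - β)) * ((2:ℝ) ^ (1 - β) * (M ^ β + M ^ (2 - β))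
      + M * (1 + (2 - β) * M ^ (1 - β) * (2:ℝ) ^ (1 - β))) with hKdef
    have hK0 : 0 ≤ K := by
      apply mul_nonneg hc.le
      have n1 : (0:ℝ) ≤ (2:ℝ) ^ (1 - β) := Real.rpow_nonneg (by norm_num) _
      have n2 : (0:ℝ) ≤ M ^ β := Real.rpow_nonneg hM0 _
      have n3 : (0:ℝ) ≤ M ^ (2 - β) := Real.rpow_nonneg hM0 _
      have n4 : (0:ℝ) ≤ M ^ (1 - β) := Real.rpow_nonneg hM0 _
      have n5 : (0:ℝ) ≤ 2 - β := by linarith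
      have t1 : (0:ℝ) ≤ (2:ℝ) ^ (1 - β) * (M ^ β + M ^ (2 - β)) := by
        apply mul_nonneg n1 (add_nonneg n2 n3)
      have t2 : (0:ℝ) ≤ M * (1 + (2 - β) * M ^ (1 - β) * (2:ℝ) ^ (1 - β)) := by
        apply mul_nonneg hM0
        have := mul_nonneg (mul_nonneg n5 n4) n1
        linarith
      linarith
    refine ⟨Metric.closedBall p 1, Metric.closedBall_mem_nhds p one_pos, K.toNNReal,
      holderOnWith_of_dist_le ?_⟩
    intro z hz w hw
    rw [Metric.mem_closedBall] at hz hw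
    set d : ℝ := dist z w with hd
    have hd0 : 0 ≤ d := dist_nonneg
    have hd2 : d ≤ 2 := by
      calc d ≤ dist z p + dist p w := dist_triangle _ _ _
        _ ≤ 1 + 1 := by rw [dist_comm p w]; exact add_le_add hz hw
        _ = 2 := by norm_num
    set a := ‖z.1‖ with ha
    set a' := ‖w.1‖ with ha'
    set b := ‖z.2‖ with hb
    set b' := ‖w.2‖ with hb'
    have ha0 : 0 ≤ a := norm_nonneg _
    have ha'0 : 0 ≤ a' := norm_nonneg _
    have hb0 : 0 ≤ b := norm_nonneg _
    have hb'0 : 0 ≤ b' := norm_nonneg _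
    -- component bounds
    have habs : ∀ u : ℂ × ℂ, dist u p ≤ 1 → ‖u.1‖ ≤ M ∧ ‖u.2‖ ≤ M := by
      intro u hu
      constructor
      · have hf : dist u.1 p.1 ≤ dist u p := by
          rw [Prod.dist_eq]; exact le_max_left _ _
        have h1 : dist u.1 p.1 ≤ 1 := le_trans hf hu
        rw [Complex.dist_eq] at h1
        have := norm_add_le (u.1 - p.1) p.1
        simp only [sub_add_cancel] at this
        have h2 := norm_nonneg p.2
        linarith
      · have hf : dist u.2 p.2 ≤ dist u p := by
          rw [Prod.dist_eq]; exact le_max_right _ _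
        have h1 : dist u.2 p.2 ≤ 1 := le_trans hf hu
        rw [Complex.dist_eq] at h1
        have := norm_add_le (u.2 - p.2) p.2
        simp only [sub_add_cancel] at this
        have h2 := norm_nonneg p.1
        linarith
    obtain ⟨haM, hbM⟩ := habs z hz
    obtain ⟨ha'M, hb'M⟩ := habs w hw
    have haa' : |a - a'| ≤ d := by
      have h1 : |a - a'| ≤ ‖z.1 - w.1‖ := abs_norm_sub_norm_le _ _
      have h2 : ‖z.1 - w.1‖ ≤ d := by
        rw [← Complex.dist_eq, hd, Prod.dist_eq]; exact le_max_left _ _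
      linarith
    have hbb' : |b - b'| ≤ d := by
      have h1 : |b - b'| ≤ ‖z.2 - w.2‖ := abs_norm_sub_norm_le _ _
      have h2 : ‖z.2 - w.2‖ ≤ d := by
        rw [← Complex.dist_eq, hd, Prod.dist_eq]; exact le_max_right _ _
      linarith
    have hdβ0 : 0 ≤ d ^ β := Real.rpow_nonneg hd0 _
    have hdle : d ≤ (2:ℝ) ^ (1 - β) * d ^ β := by
      rcases eq_or_lt_of_le hd0 with h | h
      · rw [← h, Real.zero_rpow hβ0.ne', mul_zero]
      · have heq : d = d ^ β * d ^ (1 - β) := by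
          rw [← Real.rpow_add h]; norm_num
        have hle : d ^ (1 - β) ≤ (2:ℝ) ^ (1 - β) :=
          Real.rpow_le_rpow hd0 hd2 (by linarith)
        calc d = d ^ β * d ^ (1 - β) := heq
          _ ≤ d ^ β * (2:ℝ) ^ (1 - β) := by
              exact mul_le_mul_of_nonneg_left hle hdβ0
          _ = (2:ℝ) ^ (1 - β) * d ^ β := by ring
    -- Hölder estimates for the two powers
    have key1 : |a ^ β - a' ^ β| ≤ d ^ β := by
      refine le_trans (abs_rpow_sub_rpow_le hβ0 hβ1.le ha0 ha'0) ?_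
      exact Real.rpow_le_rpow (abs_nonneg _) haa' hβ0.le
    have key2 : |a ^ (2 - β) - a' ^ (2 - β)| ≤ (2 - β) * M ^ (1 - β) * d := by
      have h := abs_rpow_sub_rpow_le_mul (q := 2 - β) (M := M) (by linarith)
        ⟨ha0, haM⟩ ⟨ha'0, ha'M⟩
      have hexp : (2 - β) - 1 = 1 - β := by ring
      rw [hexp] at h
      refine le_trans h ?_
      have hnn : (0:ℝ) ≤ (2 - β) * M ^ (1 - β) := by
        apply mul_nonneg (by linarith) (Real.rpow_nonneg hM0 _)
      exact mul_le_mul_of_nonneg_left haa' hnn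
    have hmul : (0:ℝ) ≤ (2 - β) * M ^ (1 - β) := by
      apply mul_nonneg (by linarith) (Real.rpow_nonneg hM0 _)
    have key2' : |a ^ (2 - β) - a' ^ (2 - β)|
        ≤ (2 - β) * M ^ (1 - β) * ((2:ℝ) ^ (1 - β) * d ^ β) := by
      refine le_trans key2 (mul_le_mul_of_nonneg_left hdle hmul)
    -- bounds on the factors
    have hA : a ^ β + a ^ (2 - β) ≤ M ^ β + M ^ (2 - β) :=
      add_le_add (Real.rpow_le_rpow ha0 haM hβ0.le)
        (Real.rpow_le_rpow ha0 haM (by linarith))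
    have hA0 : 0 ≤ a ^ β + a ^ (2 - β) :=
      add_nonneg (Real.rpow_nonneg ha0 _) (Real.rpow_nonneg ha0 _)
    -- main computation
    have hsplit : v β z - v β w = (2 / (1 - β)) * ((b - b') * (a ^ β + a ^ (2 - β))
        + b' * ((a ^ β - a' ^ β) + (a ^ (2 - β) - a' ^ (2 - β)))) := by
      simp only [v, ← ha, ← ha', ← hb, ← hb']
      ring
    have hbound : |v β z - v β w| ≤ K * d ^ β := by
      rw [hsplit, abs_mul, abs_of_nonneg hc.le]
      have hstep1 : |(b - b') * (a ^ β + a ^ (2 - β))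
          + b' * ((a ^ β - a' ^ β) + (a ^ (2 - β) - a' ^ (2 - β)))|
          ≤ |b - b'| * (a ^ β + a ^ (2 - β))
            + b' * (|a ^ β - a' ^ β| + |a ^ (2 - β) - a' ^ (2 - β)|) := by
        refine le_trans (abs_add_le _ _) (add_le_add ?_ ?_)
        · rw [abs_mul, abs_of_nonneg hA0]
        · rw [abs_mul, abs_of_nonneg hb'0]
          exact mul_le_mul_of_nonneg_left (abs_add_le _ _) hb'0
      have hstep2 : |b - b'| * (a ^ β + a ^ (2 - β))
          ≤ ((2:ℝ) ^ (1 - β) * d ^ β) * (M ^ β + M ^ (2 - β)) := by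
        apply mul_le_mul (le_trans hbb' hdle) hA hA0
        positivity
      have hstep3 : b' * (|a ^ β - a' ^ β| + |a ^ (2 - β) - a' ^ (2 - β)|)
          ≤ M * (d ^ β + (2 - β) * M ^ (1 - β) * ((2:ℝ) ^ (1 - β) * d ^ β)) := by
        apply mul_le_mul hb'M (add_le_add key1 key2') (by positivity) hM0
      calc (2 / (1 - β)) * |(b - b') * (a ^ β + a ^ (2 - β))
          + b' * ((a ^ β - a' ^ β) + (a ^ (2 - β) - a' ^ (2 - β)))|
          ≤ (2 / (1 - β)) * (((2:ℝ) ^ (1 - β) * d ^ β) * (M ^ β + M ^ (2 - β))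
            + M * (d ^ β + (2 - β) * M ^ (1 - β) * ((2:ℝ) ^ (1 - β) * d ^ β))) := by
            apply mul_le_mul_of_nonneg_left _ hc.le
            exact le_trans hstep1 (add_le_add hstep2 hstep3)
        _ = K * d ^ β := by rw [hKdef]; ring
    rw [Real.dist_eq]
    refine le_trans hbound ?_
    apply mul_le_mul_of_nonneg_right _ hdβ0
    rw [Real.coe_toNNReal K hK0]
  · -- not locally α-Hölder at (0, z₂)
    rintro α hα z₂ hz₂ ⟨N, hN, C, hC⟩
    obtain ⟨ε, hε, hball⟩ := Metric.mem_nhds_iff.1 hN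
    have hb2 : 0 < ‖z₂‖ := norm_pos_iff.mpr hz₂
    have hcb : 0 < 2 / (1 - β) * ‖z₂‖ := mul_pos hc hb2
    -- key estimate for small positive t
    have key : ∀ t : ℝ, 0 < t → t < ε →
        2 / (1 - β) * ‖z₂‖ ≤ C * t ^ (α - β) := by
      intro t ht htε
      set x : ℂ × ℂ := ((t : ℂ), z₂) with hx
      set y : ℂ × ℂ := ((0 : ℂ), z₂) with hy
      have hdxy : dist x y = t := by
        rw [Prod.dist_eq]
        simp [hx, hy, Complex.dist_eq, Complex.norm_real, Real.norm_eq_abs, abs_of_pos ht, max_eq_left ht.le]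
      have hxN : x ∈ N := by
        apply hball
        rw [Metric.mem_ball]
        have : dist x ((0 : ℂ), z₂) = t := hdxy
        rw [this]; exact htε
      have hyN : y ∈ N := by
        apply hball
        rw [Metric.mem_ball]
        simp [hy, hε]
      have hd := holderOnWith_dist_le hC hxN hyN
      rw [hdxy] at hd
      have hvx : v β x = 2 / (1 - β) * ‖z₂‖ * (t ^ β + t ^ (2 - β)) := by
        simp [v, hx, Complex.norm_real, Real.norm_eq_abs, abs_of_pos ht]
      have hvy : v β y = 0 := by
        simp [v, hy, Real.zero_rpow hβ0.ne', Real.zero_rpow (by linarith : (2:ℝ) - β ≠ 0)]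
      rw [Real.dist_eq, hvx, hvy, sub_zero, abs_of_nonneg (by positivity)] at hd
      have h1 : 2 / (1 - β) * ‖z₂‖ * t ^ β ≤ C * t ^ α := by
        have h2 : 2 / (1 - β) * ‖z₂‖ * t ^ β
            ≤ 2 / (1 - β) * ‖z₂‖ * (t ^ β + t ^ (2 - β)) := by
          have : (0:ℝ) ≤ t ^ (2 - β) := Real.rpow_nonneg ht.le _
          nlinarith
        exact le_trans h2 hd
      have htβ : 0 < t ^ β := Real.rpow_pos_of_pos ht _
      have hsplit : t ^ α = t ^ (α - β) * t ^ β := by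
        rw [← Real.rpow_add ht]; ring_nf
      rw [hsplit, ← mul_assoc] at h1
      exact le_of_mul_le_mul_right h1 htβ
    -- take t → 0⁺ to get a contradiction
    have htend : Tendsto (fun t : ℝ => (C : ℝ) * t ^ (α - β)) (𝓝[>] (0:ℝ)) (𝓝 0) := by
      have h0 : ContinuousAt (fun t : ℝ => t ^ (α - β)) 0 :=
        Real.continuousAt_rpow_const 0 (α - β) (Or.inr (by linarith))
      have h1 : Tendsto (fun t : ℝ => t ^ (α - β)) (𝓝 0) (𝓝 0) := by
        have := h0.tendsto
        rwa [Real.zero_rpow (by linarith : α - β ≠ 0)] at this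
      have h2 : Tendsto (fun t : ℝ => (C : ℝ) * t ^ (α - β)) (𝓝[>] (0:ℝ)) (𝓝 ((C:ℝ) * 0)) :=
        (h1.const_mul (C : ℝ)).mono_left nhdsWithin_le_nhds
      simpa using h2
    have hev : ∀ᶠ t in 𝓝[>] (0:ℝ),
        2 / (1 - β) * ‖z₂‖ ≤ (C : ℝ) * t ^ (α - β) := by
      have hIoo : Ioo (0:ℝ) ε ∈ 𝓝[>] (0:ℝ) := Ioo_mem_nhdsGT_of_mem ⟨le_refl 0, hε⟩
      filter_upwards [hIoo] with t ht
      exact key t ht.1 ht.2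
    have : 2 / (1 - β) * ‖z₂‖ ≤ 0 := ge_of_tendsto htend hev
    linarith
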